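/- The map φ : ℍ → ℝ × ℂ defined on ℂ² ≅ ℍ by φ(z,w) = (½(|z|² − |w|²), i·z·w) is surjective. -/

import Mathlib

/-- The hyperkähler moment map `φ(z,w) = (½(|z|² − |w|²), i·z·w)` on ℍ ≅ ℂ² is
surjective onto ℝ × ℂ ≅ ℝ³. -/
theorem stmt_0 :
    Function.Surjective (fun p : ℂ × ℂ =>
      ((1 / 2 : ℝ) * (‖p.1‖ ^ 2 - ‖p.2‖ ^ 2),
        Complex.I * p.1 * p.2) : ℂ × ℂ → ℝ × ℂ) := by
  rintro ⟨t, c⟩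
  set r : ℝ := ‖c‖ with hr
  have hr0 : 0 ≤ r := norm_nonneg c
  set s : ℝ := Real.sqrt (t ^ 2 + r ^ 2) with hsdef
  have hs0 : 0 ≤ s := Real.sqrt_nonneg _
  have hs : s ^ 2 = t ^ 2 + r ^ 2 := Real.sq_sqrt (by positivity)
  have hts : |t| ≤ s := by
    rw [hsdef]
    have : |t| = Real.sqrt (t ^ 2) := by
      rw [Real.sqrt_sq_eq_abs]
    rw [this]
    exact Real.sqrt_le_sqrt (by nlinarith)
  have hts' : 0 ≤ t + s := by
    have := abs_le.mp hts
    linarith [this.1]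
  by_cases h : t + s = 0
  · -- then c = 0, t ≤ 0
    have hr_zero : r = 0 := by nlinarith [abs_le.mp hts]
    have hc : c = 0 := by
      have := norm_eq_zero.mp (by rw [← hr]; exact hr_zero)
      exact this
    refine ⟨(0, (Real.sqrt (-2 * t) : ℝ)), ?_⟩
    have ht : t ≤ 0 := by nlinarith [abs_le.mp hts]
    simp only [Prod.mk.injEq, hc]
    constructor
    · simp only [Complex.norm_real, Real.norm_eq_abs, norm_zero,
        abs_of_nonneg (Real.sqrt_nonneg _)]
      rw [Real.sq_sqrt (by linarith : (0:ℝ) ≤ -2 * t)]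
      ring
    · ring
  · have ha0 : 0 < t + s := lt_of_le_of_ne hts' (Ne.symm h)
    set a : ℝ := Real.sqrt (t + s) with hadef
    have ha : 0 < a := Real.sqrt_pos.mpr ha0
    have ha2 : a ^ 2 = t + s := Real.sq_sqrt hts'
    have haC : (a : ℂ) ≠ 0 := by exact_mod_cast ha.ne'
    refine ⟨((a : ℂ), (-Complex.I * c) / (a : ℂ)), ?_⟩
    simp only [Prod.mk.injEq]
    constructor
    · have h1 : ‖(a : ℂ)‖ = a := by
        rw [Complex.norm_real, Real.norm_eq_abs, abs_of_pos ha]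
      have h2 : ‖(-Complex.I * c) / (a : ℂ)‖ = r / a := by
        rw [norm_div, norm_mul, norm_neg, Complex.norm_I, one_mul, h1, hr]
      rw [h1, h2]
      have key : a ^ 2 * a ^ 2 - r ^ 2 = 2 * t * a ^ 2 := by
        rw [ha2]; nlinarith
      field_simp
      nlinarith
    · field_simp
      ring_nf
      simp [Complex.I_sq]
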